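/- Suppose A is a finite set of reals such that for every finite set B ⊆ ℝ and every real τ ≥ 1, |{x ∈ A − B : δ_{A,B}(x) ≥ τ}| ≤ K · |A| · |B|² / τ³ for some constant K ≥ 1. Then for every finite nonempty set B, E(A, B) ≤ C · K^{1/2} · |A| · |B|^{3/2} for an absolute constant C. -/

import Mathlib

open Finset Pointwise

noncomputable def dXY (X Y : Finset ℝ) (s : ℝ) : ℕ :=
  ((X ×ˢ Y).filter (fun p => p.1 - p.2 = s)).card

/-- `E(X,Y) = ∑_s δ_{X,Y}(s)^2`. -/
noncomputable def energyXY (X Y : Finset ℝ) : ℝ :=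
  ∑ s ∈ X - Y, (dXY X Y s : ℝ) ^ 2

lemma sum_dXY (A B : Finset ℝ) : ∑ s ∈ A - B, dXY A B s = A.card * B.card := by
  rw [← Finset.card_product]
  exact (Finset.card_eq_sum_card_fiberwise (f := fun p : ℝ × ℝ => p.1 - p.2)
    (fun p hp => Finset.sub_mem_sub (Finset.mem_product.mp hp).1 (Finset.mem_product.mp hp).2)).symm

lemma dXY_le (A B : Finset ℝ) (s : ℝ) : dXY A B s ≤ B.card := by
  apply Finset.card_le_card_of_injOn Prod.snd
  · intro p hp
    simp only [Finset.mem_coe, Finset.mem_filter, Finset.mem_product] at hp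
    exact hp.1.2
  · intro p hp q hq h
    simp only [Finset.coe_filter, Set.mem_setOf_eq, Finset.mem_product] at hp hq
    have : p.1 = q.1 := by rw [sub_eq_iff_eq_add] at hp hq; rw [hp.2, hq.2, h]
    exact Prod.ext this h

lemma cnt_trivial (A B : Finset ℝ) (j : ℕ) :
    j * ((A - B).filter (fun s => j ≤ dXY A B s)).card ≤ A.card * B.card := by
  calc j * ((A - B).filter (fun s => j ≤ dXY A B s)).card
      ≤ ∑ s ∈ (A - B).filter (fun s => j ≤ dXY A B s), dXY A B s := by
        rw [mul_comm, ← smul_eq_mul]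
        exact Finset.card_nsmul_le_sum _ _ _ (fun s hs => (Finset.mem_filter.mp hs).2)
    _ ≤ ∑ s ∈ A - B, dXY A B s := Finset.sum_le_sum_of_subset (Finset.filter_subset _ _)
    _ = A.card * B.card := sum_dXY A B

lemma telescope (T : ℕ) (hT : 1 ≤ T) : ∀ N : ℕ, ∑ j ∈ Finset.Ioc T N, (1:ℝ)/(j:ℝ)^2 ≤ 1/T := by
  have key : ∀ N : ℕ, T ≤ N → ∑ j ∈ Finset.Ioc T N, (1:ℝ)/(j:ℝ)^2 ≤ 1/T - 1/N := by
    intro N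
    induction N with
    | zero => intro h; omega
    | succ n ih =>
      intro h
      rcases Nat.lt_or_ge T (n+1) with h' | h'
      · have hTn : T ≤ n := by omega
        rw [Finset.sum_Ioc_succ_top hTn]
        have hn : (1:ℝ) ≤ n := by exact_mod_cast hT.trans hTn
        have h1 : (0:ℝ) < n := by linarith
        have h2 : (0:ℝ) < (n:ℝ)+1 := by linarith
        have step : (1:ℝ)/((n:ℝ)+1)^2 ≤ 1/(n:ℝ) - 1/((n:ℝ)+1) := by
          rw [div_sub_div _ _ (ne_of_gt h1) (ne_of_gt h2)]
          rw [div_le_div_iff₀ (by positivity) (by positivity)]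
          ring_nf; nlinarith
        have := ih hTn
        push_cast
        linarith
      · have : T = n + 1 := by omega
        subst this
        simp
  intro N
  rcases Nat.lt_or_ge N T with h | h
  · rw [Finset.Ioc_eq_empty (by omega)]
    simp only [Finset.sum_empty]
    positivity
  · have := key N h
    have hN : (0:ℝ) < N := by exact_mod_cast (hT.trans h : 1 ≤ N)
    have : (0:ℝ) ≤ 1/(N:ℝ) := by positivity
    linarith [key N h]

lemma gauss_sq (d : ℕ) : d^2 ≤ 2 * ∑ j ∈ Finset.Icc 1 d, j := by
  induction d with
  | zero => simp
  | succ n ih =>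
    rw [Finset.sum_Icc_succ_top (by omega)]
    ring_nf
    ring_nf at ih
    omega

lemma energy_swap (A B : Finset ℝ) :
    ∑ s ∈ A - B, (dXY A B s)^2 ≤
      2 * ∑ j ∈ Finset.Icc 1 B.card, j * ((A - B).filter (fun s => j ≤ dXY A B s)).card := by
  calc ∑ s ∈ A - B, (dXY A B s)^2
      ≤ ∑ s ∈ A - B, 2 * ∑ j ∈ Finset.Icc 1 (dXY A B s), j :=
        Finset.sum_le_sum (fun s _ => gauss_sq _)
    _ = 2 * ∑ s ∈ A - B, ∑ j ∈ Finset.Icc 1 (dXY A B s), j := by rw [Finset.mul_sum]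
    _ = 2 * ∑ j ∈ Finset.Icc 1 B.card, j * ((A - B).filter (fun s => j ≤ dXY A B s)).card := by
        congr 1
        have h1 : ∀ s ∈ A - B, Finset.Icc 1 (dXY A B s)
            = (Finset.Icc 1 B.card).filter (fun j => j ≤ dXY A B s) := by
          intro s _
          ext j
          simp only [Finset.mem_Icc, Finset.mem_filter]
          have := dXY_le A B s
          omega
        rw [Finset.sum_congr rfl (fun s hs => by rw [h1 s hs, Finset.sum_filter])]
        rw [Finset.sum_comm]
        refine Finset.sum_congr rfl (fun j _ => ?_)
        rw [← Finset.sum_filter, Finset.sum_const, smul_eq_mul, mul_comm]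

theorem stmt12 :
    ∃ C : ℝ, C > 0 ∧ ∀ (A : Finset ℝ) (K : ℝ), K ≥ 1 →
      (∀ (B : Finset ℝ) (τ : ℝ), τ ≥ 1 →
        (((A - B).filter (fun x => (dXY A B x : ℝ) ≥ τ)).card : ℝ) ≤
          K * (A.card : ℝ) * (B.card : ℝ) ^ 2 / τ ^ 3) →
      ∀ B : Finset ℝ, B.Nonempty →
        energyXY A B ≤ C * K ^ ((1 : ℝ) / 2) * (A.card : ℝ) * (B.card : ℝ) ^ ((3 : ℝ) / 2) := by
  refine ⟨6, by norm_num, ?_⟩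
  intro A K hK hTail B hB
  set a : ℝ := (A.card : ℝ) with ha_def
  set b : ℝ := (B.card : ℝ) with hb_def
  have ha : 0 ≤ a := Nat.cast_nonneg _
  have hb1 : (1:ℝ) ≤ b := by
    rw [hb_def]; exact_mod_cast Finset.card_pos.mpr hB
  have hb0 : (0:ℝ) < b := by linarith
  have hKb : (1:ℝ) ≤ K * b := by nlinarith
  set s := Real.sqrt (K * b) with hs_def
  have hs0 : 0 < s := Real.sqrt_pos.mpr (by linarith)
  have hs1 : (1:ℝ) ≤ s := by
    rw [hs_def, show (1:ℝ) = Real.sqrt 1 by simp]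
    exact Real.sqrt_le_sqrt hKb
  have hs2 : s ^ 2 = K * b := Real.sq_sqrt (by linarith)
  set T : ℕ := ⌈s⌉₊ with hT_def
  have hT1 : 1 ≤ T := Nat.ceil_pos.mpr hs0
  have hsT : s ≤ (T:ℝ) := Nat.le_ceil s
  have hTs : (T:ℝ) ≤ 2 * s := by
    have := Nat.ceil_lt_add_one (le_of_lt hs0)
    linarith
  -- count function
  set cnt : ℕ → ℕ := fun j => ((A - B).filter (fun x => j ≤ dXY A B x)).card with hcnt_def
  have cnt_le1 : ∀ j : ℕ, (j:ℝ) * (cnt j : ℝ) ≤ a * b := by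
    intro j
    rw [ha_def, hb_def]
    exact_mod_cast cnt_trivial A B j
  have cnt_le2 : ∀ j : ℕ, 1 ≤ j → (cnt j : ℝ) ≤ K * a * b ^ 2 / (j:ℝ)^3 := by
    intro j hj
    have hfeq : (A - B).filter (fun x => j ≤ dXY A B x)
        = (A - B).filter (fun x => (dXY A B x : ℝ) ≥ (j:ℝ)) := by
      apply Finset.filter_congr
      intro x _
      simp [ge_iff_le, Nat.cast_le]
    rw [hcnt_def]
    simp only [hfeq]
    exact hTail B (j:ℝ) (by exact_mod_cast hj)
  -- energy bound from swap lemma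
  have hE : energyXY A B ≤ 2 * ∑ j ∈ Finset.Icc 1 B.card, (j:ℝ) * (cnt j : ℝ) := by
    calc energyXY A B = ((∑ x ∈ A - B, (dXY A B x)^2 : ℕ) : ℝ) := by
          unfold energyXY; push_cast; rfl
      _ ≤ ((2 * ∑ j ∈ Finset.Icc 1 B.card, j * cnt j : ℕ) : ℝ) :=
          Nat.cast_le.mpr (energy_swap A B)
      _ = 2 * ∑ j ∈ Finset.Icc 1 B.card, (j:ℝ) * (cnt j : ℝ) := by push_cast; rfl
  -- split the sum
  have hsplit : ∑ j ∈ Finset.Icc 1 B.card, (j:ℝ) * (cnt j : ℝ)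
      ≤ ∑ j ∈ Finset.Icc 1 T, (j:ℝ) * (cnt j : ℝ)
        + ∑ j ∈ Finset.Ioc T B.card, (j:ℝ) * (cnt j : ℝ) := by
    rw [← Finset.sum_union (by
      simp only [Finset.disjoint_left, Finset.mem_Icc, Finset.mem_Ioc]
      omega)]
    apply Finset.sum_le_sum_of_subset_of_nonneg
    · intro j hj
      simp only [Finset.mem_Icc, Finset.mem_union, Finset.mem_Ioc] at hj ⊢
      omega
    · intros; positivity
  have hpart1 : ∑ j ∈ Finset.Icc 1 T, (j:ℝ) * (cnt j : ℝ) ≤ (T:ℝ) * (a * b) := by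
    calc ∑ j ∈ Finset.Icc 1 T, (j:ℝ) * (cnt j : ℝ)
        ≤ ∑ _j ∈ Finset.Icc 1 T, (a * b) := Finset.sum_le_sum (fun j _ => cnt_le1 j)
      _ = ((Finset.Icc 1 T).card : ℝ) * (a * b) := by rw [Finset.sum_const, nsmul_eq_mul]
      _ = (T:ℝ) * (a * b) := by rw [Nat.card_Icc]; norm_num
  have hpart2 : ∑ j ∈ Finset.Ioc T B.card, (j:ℝ) * (cnt j : ℝ)
      ≤ K * a * b ^ 2 * (1 / (T:ℝ)) := by
    calc ∑ j ∈ Finset.Ioc T B.card, (j:ℝ) * (cnt j : ℝ)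
        ≤ ∑ j ∈ Finset.Ioc T B.card, K * a * b ^ 2 * (1 / (j:ℝ)^2) := by
          apply Finset.sum_le_sum
          intro j hj
          have hj1 : 1 ≤ j := by
            have := (Finset.mem_Ioc.mp hj).1; omega
          have hjR : (0:ℝ) < (j:ℝ) := by exact_mod_cast hj1
          have := cnt_le2 j hj1
          have h2 : (j:ℝ) * (cnt j : ℝ) ≤ (j:ℝ) * (K * a * b ^ 2 / (j:ℝ)^3) := by
            exact mul_le_mul_of_nonneg_left this (le_of_lt hjR)
          refine h2.trans (le_of_eq ?_)
          field_simp
      _ = K * a * b ^ 2 * ∑ j ∈ Finset.Ioc T B.card, (1 / (j:ℝ)^2) := by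
          rw [Finset.mul_sum]
      _ ≤ K * a * b ^ 2 * (1 / (T:ℝ)) := by
          apply mul_le_mul_of_nonneg_left (telescope T hT1 B.card)
          positivity
  -- combine
  have hT0 : (0:ℝ) < (T:ℝ) := lt_of_lt_of_le hs0 hsT
  have hKab : (0:ℝ) ≤ K * a * b ^ 2 := by positivity
  have hinv : 1 / (T:ℝ) ≤ 1 / s := by
    apply one_div_le_one_div_of_le hs0 hsT
  have hmain : energyXY A B ≤ 2 * ((2*s) * (a*b) + K * a * b ^ 2 * (1/s)) := by
    have h1 : (T:ℝ) * (a*b) ≤ (2*s) * (a*b) := by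
      apply mul_le_mul_of_nonneg_right hTs (by positivity)
    have h2 : K * a * b ^ 2 * (1/(T:ℝ)) ≤ K * a * b ^ 2 * (1/s) := by
      exact mul_le_mul_of_nonneg_left hinv hKab
    calc energyXY A B ≤ 2 * ∑ j ∈ Finset.Icc 1 B.card, (j:ℝ) * (cnt j : ℝ) := hE
      _ ≤ 2 * ((T:ℝ) * (a*b) + K * a * b ^ 2 * (1/(T:ℝ))) := by linarith [hsplit, hpart1, hpart2]
      _ ≤ 2 * ((2*s) * (a*b) + K * a * b ^ 2 * (1/s)) := by linarith
  have hKs : K * a * b ^ 2 * (1/s) = a * b * s := by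
    have hsne : s ≠ 0 := ne_of_gt hs0
    field_simp
    nlinarith [hs2]
  rw [hKs] at hmain
  -- rewrite RHS
  have hrhs : (6:ℝ) * K ^ ((1:ℝ)/2) * a * b ^ ((3:ℝ)/2) = 6 * (a * b * s) := by
    have hK0 : (0:ℝ) < K := by linarith
    have h1 : K ^ ((1:ℝ)/2) = Real.sqrt K := (Real.sqrt_eq_rpow K).symm
    have h2 : b ^ ((3:ℝ)/2) = b * Real.sqrt b := by
      rw [show (3:ℝ)/2 = 1 + 1/2 by norm_num, Real.rpow_add hb0, Real.rpow_one,
        ← Real.sqrt_eq_rpow]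
    rw [h1, h2, hs_def, Real.sqrt_mul (by linarith : (0:ℝ) ≤ K)]
    ring
  rw [hrhs]
  linarith
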